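/- Let f : ℝ₊ → ℝ₊ be non-increasing with x ↦ x·f(x) non-decreasing and Σ_{n≥1} f(n)/n < ∞. Let (aₙ) be a sequence of positive numbers satisfying |a_{n+1} − aₙ| ≤ aₙ·f(aₙ·mⁿ) for all n ≥ 0, for some m > 1. Then lim_{n→∞} aₙ exists; moreover there exists b₀ depending only on f and m such that a₀ > b₀ implies lim aₙ > 0. -/

import Mathlib

open Filter Finset


-- Step A: condensation: Summable f(2^k)
lemma step_A (f : ℝ → ℝ)
    (hfnn : ∀ x : ℝ, 0 ≤ x → 0 ≤ f x)
    (hfanti : AntitoneOn f (Set.Ici (0 : ℝ)))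
    (hfsum : Summable (fun n : ℕ => f (n + 1) / (n + 1))) :
    Summable (fun k : ℕ => f ((2:ℝ) ^ k)) := by
  set g : ℕ → ℝ := fun n => f n / n with hg
  have hganti : ∀ ⦃p q : ℕ⦄, 0 < p → p ≤ q → g q ≤ g p := by
    intro p q hp hpq
    have hp' : (0:ℝ) < p := by exact_mod_cast hp
    have hq' : (0:ℝ) < q := lt_of_lt_of_le hp' (by exact_mod_cast hpq)
    have h1 : f q ≤ f p := hfanti (by simp [hp'.le]) (by simp [hq'.le]) (by exact_mod_cast hpq)
    have h2 : 0 ≤ f q := hfnn _ hq'.le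
    exact div_le_div₀ (hfnn _ hp'.le) h1 hp' (by exact_mod_cast hpq)
  have hgnn : ∀ n, 0 ≤ g n := by
    intro n
    cases n with
    | zero => simp [hg]
    | succ k =>
      have : (0:ℝ) ≤ (k+1:ℕ) := by positivity
      exact div_nonneg (hfnn _ this) this
  have hgsum : Summable g := by
    rw [← summable_nat_add_iff 1]
    convert hfsum using 2 with n
    case e'_3 => rfl
    simp only [hg]
    push_cast
    ring_nf
  have := (summable_condensed_iff_of_nonneg hgnn hganti).2 hgsum
  refine this.congr fun k => ?_
  have h2k : ((2:ℕ)^k : ℝ) = (2:ℝ)^k := by push_cast; ring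
  have hne : ((2:ℝ))^k ≠ 0 := by positivity
  simp only [hg]
  push_cast
  field_simp

lemma sum_div_blocks (g : ℕ → ℝ) (p : ℕ) (hp : 0 < p) (Q : ℕ) :
    ∑ n ∈ range (p * Q), g (n / p) = p * ∑ q ∈ range Q, g q := by
  induction Q with
  | zero => simp
  | succ Q ih =>
    have h1 : p * (Q + 1) = p * Q + p := by ring
    rw [h1, Finset.range_eq_Ico, ← Finset.sum_Ico_consecutive _ (Nat.zero_le _)
      (Nat.le_add_right _ _), ← Finset.range_eq_Ico, ih]
    have h2 : ∑ n ∈ Finset.Ico (p * Q) (p * Q + p), g (n / p) = p * g Q := by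
      have hconst : ∀ n ∈ Finset.Ico (p * Q) (p * Q + p), g (n / p) = g Q := by
        intro n hn
        simp only [Finset.mem_Ico] at hn
        congr 1
        refine Nat.div_eq_of_lt_le (by linarith [hn.1, Nat.mul_comm p Q]) ?_
        calc n < p * Q + p := hn.2
          _ = (Q + 1) * p := by ring
      rw [Finset.sum_congr rfl hconst, Finset.sum_const, Nat.card_Ico]
      simp [nsmul_eq_mul]
    rw [h2, Finset.sum_range_succ]
    ring

lemma step_B (f : ℝ → ℝ)
    (hfnn : ∀ x : ℝ, 0 ≤ x → 0 ≤ f x)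
    (hfanti : AntitoneOn f (Set.Ici (0 : ℝ)))
    (h2 : Summable (fun k : ℕ => f ((2:ℝ) ^ k)))
    (m : ℝ) (hm : 1 < m) :
    Summable (fun n : ℕ => f (m ^ n)) := by
  obtain ⟨p, hp2⟩ := pow_unbounded_of_one_lt (2:ℝ) hm
  have hp : 0 < p := by
    rcases Nat.eq_zero_or_pos p with h | h
    · exfalso; rw [h] at hp2; norm_num at hp2
    · exact h
  have hkey : ∀ n : ℕ, f (m ^ n) ≤ f ((2:ℝ) ^ (n / p)) := by
    intro n
    have hle : (2:ℝ) ^ (n / p) ≤ m ^ n := by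
      calc (2:ℝ) ^ (n / p) ≤ (m ^ p) ^ (n / p) := by
            exact pow_le_pow_left₀ (by norm_num) hp2.le _
        _ = m ^ (p * (n / p)) := by rw [pow_mul]
        _ ≤ m ^ n := by
            apply pow_le_pow_right₀ hm.le
            rw [mul_comm]; exact Nat.div_mul_le_self n p
    exact hfanti (by simp [pow_nonneg] : (2:ℝ)^(n/p) ∈ Set.Ici (0:ℝ))
      (by simp [pow_nonneg (by linarith : (0:ℝ) ≤ m)]) hle
  have h2nn : ∀ k : ℕ, 0 ≤ f ((2:ℝ) ^ k) := fun k => hfnn _ (by positivity)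
  apply summable_of_sum_range_le (c := p * ∑' k : ℕ, f ((2:ℝ) ^ k))
    (fun n => hfnn _ (by positivity))
  intro N
  calc ∑ n ∈ range N, f (m ^ n) ≤ ∑ n ∈ range N, f ((2:ℝ) ^ (n / p)) :=
        Finset.sum_le_sum fun n _ => hkey n
    _ ≤ ∑ n ∈ range (p * (N / p + 1)), f ((2:ℝ) ^ (n / p)) := by
        apply Finset.sum_le_sum_of_subset_of_nonneg
        · apply Finset.range_subset_range.2
          rw [mul_comm]
          exact ((Nat.div_lt_iff_lt_mul hp).1 (Nat.lt_succ_self _)).le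
        · intro i _ _; exact hfnn _ (by positivity)
    _ = p * ∑ q ∈ range (N / p + 1), f ((2:ℝ) ^ q) := sum_div_blocks (fun k => f ((2:ℝ) ^ k)) p hp (N / p + 1)
    _ ≤ p * ∑' k : ℕ, f ((2:ℝ) ^ k) := by
        apply mul_le_mul_of_nonneg_left _ (by positivity)
        exact Summable.sum_le_tsum _ (fun i _ => h2nn i) h2


section klebmain
variable (f : ℝ → ℝ)
    (hfnn : ∀ x : ℝ, 0 ≤ x → 0 ≤ f x)
    (hfanti : AntitoneOn f (Set.Ici (0 : ℝ)))
    (hfmono : MonotoneOn (fun x => x * f x) (Set.Ici (0 : ℝ)))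
    (m : ℝ) (hm : 1 < m)
    (hsumm : Summable (fun n : ℕ => f (m ^ n)))

include hfnn hfanti hfmono hm hsumm in
lemma kleb_part1 : ∀ a : ℕ → ℝ, (∀ n, 0 < a n) →
      (∀ n : ℕ, |a (n + 1) - a n| ≤ a n * f (a n * m ^ n)) →
      ∃ L : ℝ, Tendsto a atTop (nhds L) := by
  have hmpos : (0:ℝ) < m := by linarith
  intro a hapos hrec
  set S := ∑' k : ℕ, f (m ^ k) with hS
  have htermnn : ∀ k : ℕ, 0 ≤ f (m ^ k) := fun k => hfnn _ (by positivity)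
  have hSn_le : ∀ n : ℕ, ∑ k ∈ range n, f (m ^ k) ≤ S :=
    fun n => Summable.sum_le_tsum _ (fun i _ => htermnn i) hsumm
  have hSnn : 0 ≤ S := tsum_nonneg htermnn
  set K := max (max (a 0) 1) (1 + f 0) with hKdef
  have hK1 : (1:ℝ) ≤ K := le_trans (le_max_right _ _) (le_max_left _ _)
  have hbound : ∀ n, a n ≤ K * Real.exp (∑ k ∈ range n, f (m ^ k)) := by
    intro n
    induction n with
    | zero =>
      simp only [range_zero, Finset.sum_empty, Real.exp_zero, mul_one]
      exact le_trans (le_max_left _ _) (le_max_left _ _)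
    | succ n ih =>
      have hxnn : (0:ℝ) ≤ a n * m ^ n := mul_nonneg (hapos n).le (by positivity)
      have hfx : 0 ≤ f (a n * m ^ n) := hfnn _ hxnn
      have hup : a (n+1) ≤ a n * (1 + f (a n * m ^ n)) := by
        have := (abs_le.mp (hrec n)).2
        nlinarith
      rw [Finset.sum_range_succ, Real.exp_add, ← mul_assoc]
      by_cases h1 : 1 ≤ a n
      · have hfle : f (a n * m ^ n) ≤ f (m ^ n) := by
          apply hfanti (by simp [pow_nonneg hmpos.le] : (m:ℝ)^n ∈ Set.Ici (0:ℝ))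
            (Set.mem_Ici.mpr hxnn)
          nlinarith [pow_pos hmpos n]
        have hexp : 1 + f (m ^ n) ≤ Real.exp (f (m ^ n)) := by rw [add_comm]; exact Real.add_one_le_exp _
        have h2 : a (n+1) ≤ a n * (1 + f (m ^ n)) := by nlinarith [(hapos n)]
        have h3 : a n * (1 + f (m ^ n)) ≤ (K * Real.exp (∑ k ∈ range n, f (m ^ k))) * (1 + f (m ^ n)) := by
          apply mul_le_mul_of_nonneg_right ih
          nlinarith [htermnn n]
        refine le_trans h2 (le_trans h3 ?_)
        apply mul_le_mul_of_nonneg_left hexp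
        positivity
      · push_neg at h1
        have hf0 : f (a n * m ^ n) ≤ f 0 := hfanti (Set.mem_Ici.mpr le_rfl)
          (Set.mem_Ici.mpr hxnn) hxnn
        have h2 : a (n+1) ≤ 1 + f 0 := by nlinarith [hapos n, hfnn 0 le_rfl]
        have h3 : (1 + f 0 : ℝ) ≤ K := le_max_right _ _
        have h4 : (1:ℝ) ≤ Real.exp (∑ k ∈ range n, f (m ^ k)) * Real.exp (f (m ^ n)) := by
          rw [← Real.exp_add]
          apply Real.one_le_exp
          have := Finset.sum_nonneg (fun i (_ : i ∈ range n) => htermnn i)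
          nlinarith [htermnn n]
        nlinarith
  set M := max (K * Real.exp S) 1 with hM
  have hM1 : (1:ℝ) ≤ M := le_max_right _ _
  have haM : ∀ n, a n ≤ M := by
    intro n
    refine le_trans (hbound n) (le_trans ?_ (le_max_left _ _))
    apply mul_le_mul_of_nonneg_left (Real.exp_le_exp.2 (hSn_le n)) (by linarith)
  have hd : ∀ n : ℕ, |a (n+1) - a n| ≤ M * f (m ^ n) := by
    intro n
    have hmn : (0:ℝ) < m ^ n := pow_pos hmpos n
    have hx1 : (0:ℝ) ≤ a n * m ^ n := mul_nonneg (hapos n).le (by positivity)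
    have hx2 : (0:ℝ) ≤ M * m ^ n := mul_nonneg (by linarith) (by positivity)
    have hle : a n * m ^ n ≤ M * m ^ n := mul_le_mul_of_nonneg_right (haM n) hmn.le
    have hmm := hfmono (Set.mem_Ici.mpr hx1) (Set.mem_Ici.mpr hx2) hle
    simp only at hmm
    have h5 : a n * f (a n * m ^ n) ≤ M * f (M * m ^ n) := by
      have := mul_le_mul_of_nonneg_right hmm (le_of_lt (inv_pos.2 hmn))
      calc a n * f (a n * m ^ n) = (a n * m ^ n) * f (a n * m ^ n) * (m ^ n)⁻¹ := by
            field_simp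
        _ ≤ (M * m ^ n) * f (M * m ^ n) * (m ^ n)⁻¹ := this
        _ = M * f (M * m ^ n) := by field_simp
    have h6 : f (M * m ^ n) ≤ f (m ^ n) := by
      apply hfanti (Set.mem_Ici.mpr hmn.le) (Set.mem_Ici.mpr hx2)
      nlinarith
    refine le_trans (hrec n) (le_trans h5 ?_)
    nlinarith
  have hdsum : Summable (fun n : ℕ => a (n+1) - a n) := by
    apply Summable.of_abs
    exact Summable.of_nonneg_of_le (fun n => abs_nonneg _) hd (hsumm.mul_left M)
  refine ⟨a 0 + ∑' n : ℕ, (a (n+1) - a n), ?_⟩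
  have hten := hdsum.hasSum.tendsto_sum_nat
  have := (tendsto_const_nhds (x := a 0)).add hten
  refine this.congr fun n => ?_
  rw [Finset.sum_range_sub (f := a)]
  ring

end klebmain

section klebmain2
variable (f : ℝ → ℝ)
    (hfnn : ∀ x : ℝ, 0 ≤ x → 0 ≤ f x)
    (hfanti : AntitoneOn f (Set.Ici (0 : ℝ)))
    (hfmono : MonotoneOn (fun x => x * f x) (Set.Ici (0 : ℝ)))
    (m : ℝ) (hm : 1 < m)
    (hsumm : Summable (fun n : ℕ => f (m ^ n)))

set_option maxHeartbeats 1000000 in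
include hfnn hfanti hfmono hm hsumm in
lemma kleb_part2 : ∃ b₀ : ℝ, ∀ a : ℕ → ℝ, (∀ n, 0 < a n) →
      (∀ n : ℕ, |a (n + 1) - a n| ≤ a n * f (a n * m ^ n)) →
      b₀ < a 0 →
      ∃ L : ℝ, 0 < L ∧ Tendsto a atTop (nhds L) := by
  have hmpos : (0:ℝ) < m := by linarith
  have htermnn : ∀ k : ℕ, 0 ≤ f (m ^ k) := fun k => hfnn _ (by positivity)
  have htail := tendsto_sum_nat_add (fun n : ℕ => f (m ^ n))
  obtain ⟨N, hN⟩ := (htail.eventually (gt_mem_nhds (by norm_num : (0:ℝ) < 1/4))).exists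
  -- hN : ∑' k, f (m ^ (k + N)) < 1/4
  set T := ∑' k : ℕ, f (m ^ (k + N)) with hTdef
  have hT : T ≤ 1/4 := hN.le
  have hsummN : Summable (fun k : ℕ => f (m ^ (k + N))) :=
    (summable_nat_add_iff N).2 hsumm
  have hTnn : ∀ n, 0 ≤ f (m ^ (n + N)) := fun n => hfnn _ (by positivity)
  have hterm_le : ∀ n : ℕ, f (m ^ (n + N)) ≤ T := fun n => Summable.le_tsum hsummN n
    (fun j _ => hTnn j)
  have hmN1 : (1:ℝ) ≤ m ^ N := one_le_pow₀ hm.le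
  refine ⟨2 * m ^ N, ?_⟩
  intro a hapos hrec ha0
  have hmN0 : (0:ℝ) < m ^ N := by positivity
  have ha0pos : 0 < a 0 := hapos 0
  set Tn : ℕ → ℝ := fun n => ∑ k ∈ range n, f (m ^ (k + N)) with hTn
  have hTn_nn : ∀ n, 0 ≤ Tn n := fun n => Finset.sum_nonneg fun i _ => hTnn i
  have hTn_le : ∀ n, Tn n ≤ T := fun n => Summable.sum_le_tsum _ (fun i _ => hTnn i) hsummN
  have hlow : ∀ n, a 0 * (1 - Tn n) ≤ a n := by
    intro n
    induction n with
    | zero => simp [hTn]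
    | succ n ih =>
      have h34 : (3:ℝ)/4 ≤ 1 - Tn n := by linarith [hTn_le n, hT]
      have hge : m ^ N ≤ a n := by
        have h' := mul_le_mul_of_nonneg_left h34 ha0pos.le
        linarith
      have hmn : (0:ℝ) < m ^ n := pow_pos hmpos n
      have hf1 : f (a n * m ^ n) ≤ f (m ^ (n + N)) := by
        apply hfanti (Set.mem_Ici.mpr (by positivity))
          (Set.mem_Ici.mpr (mul_nonneg (hapos n).le hmn.le))
        rw [pow_add, mul_comm (m ^ n)]
        exact mul_le_mul_of_nonneg_right hge hmn.le
      have hε : f (m ^ (n + N)) ≤ T := hterm_le n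
      have hεnn : 0 ≤ f (m ^ (n + N)) := hTnn n
      have hlo := (abs_le.mp (hrec n)).1
      -- a (n+1) ≥ a n - a n * f (a n * m ^ n)
      have hTsucc : Tn (n+1) = Tn n + f (m ^ (n + N)) := Finset.sum_range_succ _ n
      have hfxnn : 0 ≤ f (a n * m ^ n) := hfnn _ (mul_nonneg (hapos n).le hmn.le)
      have hstep1 : a n - a n * f (a n * m ^ n) ≤ a (n+1) := by linarith
      have hstep2 : a n * (1 - f (m ^ (n + N))) ≤ a n - a n * f (a n * m ^ n) := by
        have := mul_le_mul_of_nonneg_left hf1 (hapos n).le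
        linarith
      have hεle : f (m ^ (n + N)) ≤ 1 := by linarith
      have hstep3 : a 0 * (1 - Tn n) * (1 - f (m ^ (n + N))) ≤ a n * (1 - f (m ^ (n + N))) :=
        mul_le_mul_of_nonneg_right ih (by linarith)
      have hstep4 : a 0 * (1 - Tn (n+1)) ≤ a 0 * (1 - Tn n) * (1 - f (m ^ (n + N))) := by
        rw [hTsucc]
        have hinner : 1 - (Tn n + f (m ^ (n + N))) ≤ (1 - Tn n) * (1 - f (m ^ (n + N))) := by
          nlinarith [mul_nonneg (hTn_nn n) hεnn]
        calc a 0 * (1 - (Tn n + f (m ^ (n + N))))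
            ≤ a 0 * ((1 - Tn n) * (1 - f (m ^ (n + N)))) :=
              mul_le_mul_of_nonneg_left hinner ha0pos.le
          _ = a 0 * (1 - Tn n) * (1 - f (m ^ (n + N))) := by ring
      linarith
  obtain ⟨L, hL⟩ := kleb_part1 f hfnn hfanti hfmono m hm hsumm a hapos hrec
  refine ⟨L, ?_, hL⟩
  have hLlb : a 0 * (1 - T) ≤ L := by
    apply ge_of_tendsto' hL
    intro n
    refine le_trans ?_ (hlow n)
    apply mul_le_mul_of_nonneg_left _ ha0pos.le
    linarith [hTn_le n]
  have h1 : (0:ℝ) < a 0 * (3/4) := by positivity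
  have h2 : a 0 * (3/4) ≤ a 0 * (1 - T) := mul_le_mul_of_nonneg_left (by linarith) ha0pos.le
  linarith

end klebmain2

/-- Klebaner's geometric-rate lemma: let `f : ℝ₊ → ℝ₊` be non-increasing with
`x ↦ x·f(x)` non-decreasing and `Σ_{n≥1} f(n)/n < ∞`, and let `m > 1`. Then every
positive sequence `(aₙ)` with `|a_{n+1} − aₙ| ≤ aₙ·f(aₙ·mⁿ)` converges, and there is
`b₀` (depending only on `f` and `m`) such that `a₀ > b₀` forces a positive limit. -/
theorem klebaner_geometric_lemma (f : ℝ → ℝ)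
    (hfnn : ∀ x : ℝ, 0 ≤ x → 0 ≤ f x)
    (hfanti : AntitoneOn f (Set.Ici (0 : ℝ)))
    (hfmono : MonotoneOn (fun x => x * f x) (Set.Ici (0 : ℝ)))
    (hfsum : Summable (fun n : ℕ => f (n + 1) / (n + 1)))
    (m : ℝ) (hm : 1 < m) :
    (∀ a : ℕ → ℝ, (∀ n, 0 < a n) →
      (∀ n : ℕ, |a (n + 1) - a n| ≤ a n * f (a n * m ^ n)) →
      ∃ L : ℝ, Tendsto a atTop (nhds L)) ∧
    ∃ b₀ : ℝ, ∀ a : ℕ → ℝ, (∀ n, 0 < a n) →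
      (∀ n : ℕ, |a (n + 1) - a n| ≤ a n * f (a n * m ^ n)) →
      b₀ < a 0 →
      ∃ L : ℝ, 0 < L ∧ Tendsto a atTop (nhds L) := by
  have h2 := step_A f hfnn hfanti hfsum
  have hsumm := step_B f hfnn hfanti h2 m hm
  exact ⟨kleb_part1 f hfnn hfanti hfmono m hm hsumm,
    kleb_part2 f hfnn hfanti hfmono m hm hsumm⟩
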